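/- Let H be a real Hilbert space and φ : [0,∞) → ℝ twice continuously differentiable with φ'(0) = 0, φ'(r) > 0 and φ''(r) > 0 for r > 0. Define F(u) = φ(‖u‖) on H, and for R > 0 set λ⊥(r) = φ'(r)/r for r > 0 with λ⊥(0) = φ''(0), λ∥(r) = φ''(r), L(R) = sup over 0 ≤ r ≤ R of max{λ∥(r), λ⊥(r)}, and m(R) = inf over 0 ≤ r ≤ R of min{λ∥(r), λ⊥(r)}. Then for all u, v ∈ H with ‖u‖ ≤ R and ‖v‖ ≤ R, the Bregman divergence of F satisfies (m(R)/2)·‖u − v‖² ≤ d_F(u,v) ≤ (L(R)/2)·‖u − v‖². -/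

import Mathlib

open scoped RealInnerProductSpace

lemma auxMonoOn' {f f' : ℝ → ℝ} {a b : ℝ}
    (hd : ∀ r ∈ Set.Icc a b, HasDerivWithinAt f (f' r) (Set.Icc a b) r)
    (h' : ∀ x ∈ Set.Ioo a b, 0 ≤ f' x) : MonotoneOn f (Set.Icc a b) := by
  apply monotoneOn_of_hasDerivWithinAt_nonneg (convex_Icc a b)
    (fun r hr => (hd r hr).continuousWithinAt) (f' := f')
  · intro x hx
    exact (hd x (interior_subset hx)).mono interior_subset
  · intro x hx
    exact h' x (by rwa [interior_Icc] at hx)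

lemma derivCombo' {g h : ℝ → ℝ} {g' h' : ℝ} {s : Set ℝ} {x : ℝ}
    (hg : HasDerivWithinAt g g' s x) (hh : HasDerivWithinAt h h' s x)
    (α β A B : ℝ) :
    HasDerivWithinAt (fun t => α * g t + β * h t + A*t + B*t^2)
      (α * g' + β * h' + (A + 2*B*x)) s x := by
  have hpoly : HasDerivWithinAt (fun t : ℝ => A*t + B*t^2) (A + 2*B*x) s x := by
    have h1 := (hasDerivWithinAt_id x s).const_mul A
    have h2 := (hasDerivWithinAt_pow 2 x (s := s)).const_mul B
    exact (h1.add h2).congr_deriv (by push_cast; ring)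
  have := ((hg.const_mul α).add (hh.const_mul β)).add hpoly
  exact this.congr (fun t _ => by simp only [Pi.add_apply]; ring) (by simp only [Pi.add_apply]; ring)

/-- Sandwich bounds for the deformed squared MMD: let `φ : [0,∞) → ℝ` be twice continuously
differentiable with `φ'(0) = 0`, `φ'(r) > 0` and `φ''(r) > 0` for `r > 0`, and let
`F(u) = φ(‖u‖)` on a real Hilbert space `H`. With the Hessian eigenvalues
`λ⊥(r) = φ'(r)/r` for `r > 0` (extended by `λ⊥(0) = φ''(0)`) and `λ∥(r) = φ''(r)`, set
`L(R) = sup_{0 ≤ r ≤ R} max{λ∥(r), λ⊥(r)}` and `m(R) = inf_{0 ≤ r ≤ R} min{λ∥(r), λ⊥(r)}`.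
Then for all `u, v` with `‖u‖ ≤ R` and `‖v‖ ≤ R`, the Bregman divergence
`d_F(u,v) = F(u) − F(v) − ⟪∇F(v), u − v⟫` (with `∇F(v) = (φ'(‖v‖)/‖v‖) • v`) satisfies
`(m(R)/2)‖u − v‖² ≤ d_F(u,v) ≤ (L(R)/2)‖u − v‖²`. -/
theorem deformed_mmd_sandwich
    {H : Type*} [NormedAddCommGroup H] [InnerProductSpace ℝ H] [CompleteSpace H]
    (φ φ' φ'' : ℝ → ℝ)
    (hd1 : ∀ r ∈ Set.Ici (0:ℝ), HasDerivWithinAt φ (φ' r) (Set.Ici 0) r)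
    (hd2 : ∀ r ∈ Set.Ici (0:ℝ), HasDerivWithinAt φ' (φ'' r) (Set.Ici 0) r)
    (hcont : ContinuousOn φ'' (Set.Ici 0))
    (h0 : φ' 0 = 0)
    (hpos1 : ∀ r : ℝ, 0 < r → 0 < φ' r)
    (hpos2 : ∀ r : ℝ, 0 < r → 0 < φ'' r)
    (R : ℝ) (hR : 0 < R)
    (lamPerp : ℝ → ℝ) (hlamPerp : ∀ r : ℝ, lamPerp r = if r = 0 then φ'' 0 else φ' r / r)
    (mR LR : ℝ)
    (hm : mR = sInf ((fun r => min (φ'' r) (lamPerp r)) '' Set.Icc 0 R))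
    (hL : LR = sSup ((fun r => max (φ'' r) (lamPerp r)) '' Set.Icc 0 R))
    (u v : H) (hu : ‖u‖ ≤ R) (hv : ‖v‖ ≤ R) :
    mR / 2 * ‖u - v‖ ^ 2
        ≤ φ ‖u‖ - φ ‖v‖ - ⟪(φ' ‖v‖ / ‖v‖) • v, u - v⟫ ∧
      φ ‖u‖ - φ ‖v‖ - ⟪(φ' ‖v‖ / ‖v‖) • v, u - v⟫
        ≤ LR / 2 * ‖u - v‖ ^ 2 := by
  -- transfer derivatives to subintervals of [0,∞)
  have hsub : ∀ {lo hi : ℝ}, 0 ≤ lo → Set.Icc lo hi ⊆ Set.Ici 0 :=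
    fun hlo y hy => Set.mem_Ici.mpr (hlo.trans hy.1)
  -- generic monotonicity tool
  have mono2 : ∀ (α β A B lo hi : ℝ), 0 ≤ lo →
      (∀ x ∈ Set.Ioo lo hi, 0 ≤ α * φ' x + β * φ'' x + (A + 2*B*x)) →
      MonotoneOn (fun t => α * φ t + β * φ' t + A*t + B*t^2) (Set.Icc lo hi) := by
    intro α β A B lo hi hlo hpos
    apply auxMonoOn' (f' := fun x => α * φ' x + β * φ'' x + (A + 2*B*x))
    · intro r hr
      exact derivCombo' ((hd1 r (hsub hlo hr)).mono (hsub hlo))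
        ((hd2 r (hsub hlo hr)).mono (hsub hlo)) α β A B
    · exact hpos
  set M := sSup (φ'' '' Set.Icc 0 R) with hMdef
  have hMcpt : IsCompact (φ'' '' Set.Icc 0 R) :=
    (isCompact_Icc).image_of_continuousOn (hcont.mono (hsub le_rfl))
  have hMle : ∀ r ∈ Set.Icc (0:ℝ) R, φ'' r ≤ M :=
    fun r hr => le_csSup hMcpt.bddAbove ⟨r, hr, rfl⟩
  -- φ' r ≤ M r on [0,R]
  have hphiM : ∀ r ∈ Set.Icc (0:ℝ) R, φ' r ≤ M * r := by
    intro r hr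
    have hmono := mono2 0 (-1) M 0 0 r le_rfl (by
      intro x hx
      have hxm : x ∈ Set.Icc (0:ℝ) R := ⟨hx.1.le, hx.2.le.trans hr.2⟩
      have := hMle x hxm
      simp only [zero_mul, neg_one_mul, mul_zero, zero_mul, add_zero]
      linarith)
    have h01 := hmono (Set.left_mem_Icc.mpr hr.1) (Set.right_mem_Icc.mpr hr.1) hr.1
    simp only [zero_mul, neg_one_mul, mul_zero, add_zero, zero_pow, h0] at h01
    nlinarith [h01]
  -- φ'' 0 ≥ 0 by continuity
  have h2nn0 : 0 ≤ φ'' 0 := by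
    have hct : ContinuousWithinAt φ'' (Set.Ioi 0) 0 :=
      (hcont 0 Set.self_mem_Ici).mono Set.Ioi_subset_Ici_self
    exact ge_of_tendsto hct
      (Filter.eventually_of_mem self_mem_nhdsWithin (fun x hx => (hpos2 x hx).le))
  have h2nn : ∀ r ∈ Set.Icc (0:ℝ) R, 0 ≤ φ'' r := by
    intro r hr
    rcases eq_or_lt_of_le hr.1 with h | h
    · rwa [← h]
    · exact (hpos2 r h).le
  have hlamnn : ∀ r ∈ Set.Icc (0:ℝ) R, 0 ≤ lamPerp r := by
    intro r hr
    rw [hlamPerp]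
    split_ifs with h
    · exact h2nn0
    · have hr0 : 0 < r := lt_of_le_of_ne hr.1 (Ne.symm h)
      exact (div_pos (hpos1 r hr0) hr0).le
  have hlamle : ∀ r ∈ Set.Icc (0:ℝ) R, lamPerp r ≤ M := by
    intro r hr
    rw [hlamPerp]
    split_ifs with h
    · exact hMle 0 ⟨le_rfl, hR.le⟩
    · have hr0 : 0 < r := lt_of_le_of_ne hr.1 (Ne.symm h)
      rw [div_le_iff₀ hr0]
      exact hphiM r hr
  have hBddB : BddBelow ((fun r => min (φ'' r) (lamPerp r)) '' Set.Icc 0 R) :=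
    ⟨0, by rintro y ⟨r, hr, rfl⟩; exact le_min (h2nn r hr) (hlamnn r hr)⟩
  have hBddA : BddAbove ((fun r => max (φ'' r) (lamPerp r)) '' Set.Icc 0 R) :=
    ⟨M, by rintro y ⟨r, hr, rfl⟩; exact max_le (hMle r hr) (hlamle r hr)⟩
  have hminf : ∀ r ∈ Set.Icc (0:ℝ) R, mR ≤ min (φ'' r) (lamPerp r) :=
    fun r hr => hm ▸ csInf_le hBddB ⟨r, hr, rfl⟩
  have hLsup : ∀ r ∈ Set.Icc (0:ℝ) R, max (φ'' r) (lamPerp r) ≤ LR :=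
    fun r hr => hL ▸ le_csSup hBddA ⟨r, hr, rfl⟩
  have hm2 : ∀ r ∈ Set.Icc (0:ℝ) R, mR ≤ φ'' r :=
    fun r hr => (hminf r hr).trans (min_le_left _ _)
  have hL2 : ∀ r ∈ Set.Icc (0:ℝ) R, φ'' r ≤ LR :=
    fun r hr => (le_max_left _ _).trans (hLsup r hr)
  have hmP : ∀ r ∈ Set.Icc (0:ℝ) R, mR ≤ lamPerp r :=
    fun r hr => (hminf r hr).trans (min_le_right _ _)
  have hLP : ∀ r ∈ Set.Icc (0:ℝ) R, lamPerp r ≤ LR :=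
    fun r hr => (le_max_right _ _).trans (hLsup r hr)
  -- linear bounds on φ'
  have hB : ∀ r ∈ Set.Icc (0:ℝ) R, mR * r ≤ φ' r ∧ φ' r ≤ LR * r := by
    intro r hr
    rcases eq_or_lt_of_le hr.1 with h | h
    · constructor <;> simp [← h, h0]
    · have h1 := hmP r hr
      have h2 := hLP r hr
      rw [hlamPerp, if_neg (ne_of_gt h)] at h1 h2
      exact ⟨(le_div_iff₀ h).mp h1, (div_le_iff₀ h).mp h2⟩
  -- Taylor sandwich in 1-D
  have hTaylor : ∀ s ∈ Set.Icc (0:ℝ) R, ∀ t ∈ Set.Icc (0:ℝ) R,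
      mR/2*(t-s)^2 ≤ φ t - φ s - φ' s * (t - s) ∧
        φ t - φ s - φ' s * (t - s) ≤ LR/2*(t-s)^2 := by
    intro s hs t ht
    have hqm : MonotoneOn (fun x => (0:ℝ)*φ x + 1*φ' x + (-mR)*x + 0*x^2)
        (Set.Icc 0 R) := by
      apply mono2 0 1 (-mR) 0 0 R le_rfl
      intro x hx
      have := hm2 x ⟨hx.1.le, hx.2.le⟩
      simp only [zero_mul, one_mul, mul_zero, add_zero]
      linarith
    have hqL : MonotoneOn (fun x => (0:ℝ)*φ x + (-1)*φ' x + LR*x + 0*x^2)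
        (Set.Icc 0 R) := by
      apply mono2 0 (-1) LR 0 0 R le_rfl
      intro x hx
      have := hL2 x ⟨hx.1.le, hx.2.le⟩
      simp only [zero_mul, neg_one_mul, mul_zero, add_zero]
      linarith
    constructor
    · rcases le_total s t with hst | hst
      · have hp := mono2 1 0 (mR*s - φ' s) (-(mR/2)) s t hs.1 (by
          intro x hx
          have hxm : x ∈ Set.Icc (0:ℝ) R := ⟨hs.1.trans hx.1.le, hx.2.le.trans ht.2⟩
          have := hqm hs hxm hx.1.le
          simp only [zero_mul, one_mul, mul_zero, add_zero, zero_add] at this ⊢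
          linarith)
        have h01 := hp (Set.left_mem_Icc.mpr hst) (Set.right_mem_Icc.mpr hst) hst
        simp only [one_mul, zero_mul, add_zero, zero_add] at h01
        nlinarith [h01]
      · have hp := mono2 (-1) 0 (φ' s - mR*s) (mR/2) t s ht.1 (by
          intro x hx
          have hxm : x ∈ Set.Icc (0:ℝ) R := ⟨ht.1.trans hx.1.le, hx.2.le.trans hs.2⟩
          have := hqm hxm hs hx.2.le
          simp only [zero_mul, one_mul, mul_zero, add_zero, zero_add] at this ⊢
          linarith)
        have h01 := hp (Set.left_mem_Icc.mpr hst) (Set.right_mem_Icc.mpr hst) hst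
        simp only [neg_one_mul, zero_mul, add_zero, zero_add] at h01
        nlinarith [h01]
    · rcases le_total s t with hst | hst
      · have hp := mono2 (-1) 0 (φ' s - LR*s) (LR/2) s t hs.1 (by
          intro x hx
          have hxm : x ∈ Set.Icc (0:ℝ) R := ⟨hs.1.trans hx.1.le, hx.2.le.trans ht.2⟩
          have := hqL hs hxm hx.1.le
          simp only [zero_mul, neg_one_mul, mul_zero, add_zero, zero_add] at this ⊢
          linarith)
        have h01 := hp (Set.left_mem_Icc.mpr hst) (Set.right_mem_Icc.mpr hst) hst
        simp only [neg_one_mul, zero_mul, add_zero, zero_add] at h01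
        nlinarith [h01]
      · have hp := mono2 1 0 (LR*s - φ' s) (-(LR/2)) t s ht.1 (by
          intro x hx
          have hxm : x ∈ Set.Icc (0:ℝ) R := ⟨ht.1.trans hx.1.le, hx.2.le.trans hs.2⟩
          have := hqL hxm hs hx.2.le
          simp only [zero_mul, neg_one_mul, mul_zero, add_zero, zero_add] at this ⊢
          linarith)
        have h01 := hp (Set.left_mem_Icc.mpr hst) (Set.right_mem_Icc.mpr hst) hst
        simp only [one_mul, zero_mul, add_zero, zero_add] at h01
        nlinarith [h01]
  -- Assemble the vector statement
  rcases eq_or_ne v 0 with hv0 | hv0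
  · subst hv0
    obtain ⟨T1, T2⟩ := hTaylor 0 ⟨le_rfl, hR.le⟩ ‖u‖ ⟨norm_nonneg u, hu⟩
    rw [h0] at T1 T2
    simp only [norm_zero, smul_zero, inner_zero_left, sub_zero] at *
    constructor <;> nlinarith [T1, T2]
  · have hb : 0 < ‖v‖ := norm_pos_iff.mpr hv0
    obtain ⟨T1, T2⟩ := hTaylor ‖v‖ ⟨norm_nonneg v, hv⟩ ‖u‖ ⟨norm_nonneg u, hu⟩
    have he1 : mR ≤ φ' ‖v‖ / ‖v‖ := by
      have := hmP ‖v‖ ⟨norm_nonneg v, hv⟩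
      rwa [hlamPerp, if_neg (ne_of_gt hb)] at this
    have he2 : φ' ‖v‖ / ‖v‖ ≤ LR := by
      have := hLP ‖v‖ ⟨norm_nonneg v, hv⟩
      rwa [hlamPerp, if_neg (ne_of_gt hb)] at this
    have hinner : ⟪(φ' ‖v‖ / ‖v‖) • v, u - v⟫
        = (φ' ‖v‖ / ‖v‖) * (⟪u, v⟫ - ‖v‖^2) := by
      rw [real_inner_smul_left, inner_sub_right, real_inner_self_eq_norm_sq,
        real_inner_comm]
    have hns : ‖u - v‖^2 = ‖u‖^2 - 2*⟪u, v⟫ + ‖v‖^2 := norm_sub_sq_real u v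
    have hc1 : ⟪u, v⟫ ≤ ‖u‖ * ‖v‖ := real_inner_le_norm u v
    have hfe : (φ' ‖v‖ / ‖v‖) * (‖u‖ * ‖v‖ - ‖v‖^2) = φ' ‖v‖ * (‖u‖ - ‖v‖) := by
      field_simp
    constructor
    · rw [hinner, hns]
      nlinarith [T1, mul_nonneg (sub_nonneg.2 he1)
        (sub_nonneg.2 hc1), hfe]
    · rw [hinner, hns]
      nlinarith [T2, mul_nonneg (sub_nonneg.2 he2)
        (sub_nonneg.2 hc1), hfe]
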